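/- Let N ≥ 1 be an integer, let f_1, …, f_N be nonzero real numbers, let g, h, E be real numbers with h ≠ 0 and E ≠ 0, and let H be the complex N×N matrix with entries H_{n,m} = (1/2)·f_n·( g + i·h·sign(n − m) )·f_m. Then E is an eigenvalue of H (i.e. there exists a nonzero ψ ∈ ℂ^N with H ψ = E ψ) if and only if (g + ih)/(g − ih) = Π_{n=1}^{N} ( 2E·f_n^{−2} + i·h )/( 2E·f_n^{−2} − i·h ). -/

import Mathlib

open Complex Matrix Finset

lemma aux_ne_zero (x y : ℝ) (hy : y ≠ 0) : (x : ℂ) + Complex.I * y ≠ 0 := by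
  intro hxy
  apply hy
  simpa using congrArg Complex.im hxy

lemma aux_ne_zero' (x y : ℝ) (hy : y ≠ 0) : (x : ℂ) - Complex.I * y ≠ 0 := by
  intro hxy
  apply hy
  simpa using congrArg Complex.im hxy

lemma sign_cast {N : ℕ} (n m : Fin N) :
    (Real.sign ((((n : ℕ) : ℝ) + 1) - (((m : ℕ) : ℝ) + 1)) : ℝ) =
      if (m:ℕ) < (n:ℕ) then 1 else if (n:ℕ) < (m:ℕ) then -1 else 0 := by
  rcases lt_trichotomy (m:ℕ) (n:ℕ) with hc|hc|hc
  · rw [if_pos hc, Real.sign_of_pos]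
    have : ((m:ℕ):ℝ) < ((n:ℕ):ℝ) := by exact_mod_cast hc
    linarith
  · rw [if_neg (by omega), if_neg (by omega)]
    simp [hc]
  · rw [if_neg (by omega), if_pos hc, Real.sign_of_neg]
    have : ((n:ℕ):ℝ) < ((m:ℕ):ℝ) := by exact_mod_cast hc
    linarith

lemma Tstep {N : ℕ} (c : Fin N → ℂ) (k : ℕ) :
    (∑ m : Fin N, if (m:ℕ) < k+1 then c m else 0) =
    (∑ m : Fin N, if (m:ℕ) < k then c m else 0) + (if hk : k < N then c ⟨k,hk⟩ else 0) := by
  by_cases hk : k < N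
  · rw [dif_pos hk]
    have hterm : ∀ m : Fin N, (if (m:ℕ) < k+1 then c m else 0) =
        (if (m:ℕ) < k then c m else 0) + (if m = ⟨k,hk⟩ then c m else 0) := by
      intro m
      by_cases h1 : (m:ℕ) = k
      · have hm : m = ⟨k,hk⟩ := Fin.ext h1
        simp [hm]
      · have hne : m ≠ ⟨k,hk⟩ := by simpa [Fin.ext_iff] using h1
        rw [if_congr (show ((m:ℕ)<k+1) ↔ ((m:ℕ)<k) by omega) rfl rfl]
        simp [hne]
    rw [Finset.sum_congr rfl (fun m _ => hterm m), Finset.sum_add_distrib,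
      Finset.sum_ite_eq' univ ⟨k,hk⟩ c]
    simp
  · rw [dif_neg hk, add_zero]
    refine Finset.sum_congr rfl (fun m _ => ?_)
    exact if_congr (by have := m.isLt; omega) rfl rfl

lemma eigen_pointwise {N : ℕ} (f : Fin N → ℝ) (g h E : ℝ)
    (H : Matrix (Fin N) (Fin N) ℂ)
    (hH : ∀ n m : Fin N,
      H n m = (1 / 2 : ℂ) * (f n : ℂ) *
        ((g : ℂ) + Complex.I * (h : ℂ) *
          (Real.sign ((((n : ℕ) : ℝ) + 1) - (((m : ℕ) : ℝ) + 1)) : ℂ)) * (f m : ℂ))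
    (ψ : Fin N → ℂ) (n : Fin N) :
    (H.mulVec ψ) n = (1/2) * (f n : ℂ) * ((g:ℂ) * (∑ m : Fin N, (f m:ℂ) * ψ m)
      + Complex.I * h * (2 * (∑ m : Fin N, if (m:ℕ) < (n:ℕ)+1 then (f m:ℂ) * ψ m else 0)
          - (∑ m : Fin N, (f m:ℂ) * ψ m) - (f n:ℂ) * ψ n)) := by
  have hterm : ∀ m : Fin N, H n m * ψ m = (1/2) * (f n:ℂ) *
      ((g:ℂ) * ((f m:ℂ) * ψ m)
        + Complex.I * h * (2 * (if (m:ℕ) < (n:ℕ)+1 then (f m:ℂ) * ψ m else 0)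
            - (f m:ℂ) * ψ m - (if m = n then (f m:ℂ) * ψ m else 0))) := by
    intro m
    rw [hH]
    rw [show ((Real.sign ((((n : ℕ) : ℝ) + 1) - (((m : ℕ) : ℝ) + 1)) : ℝ) : ℂ)
        = ((if (m:ℕ) < (n:ℕ) then 1 else if (n:ℕ) < (m:ℕ) then -1 else 0 : ℝ) : ℂ) by
      rw [sign_cast n m]]
    rcases lt_trichotomy (m:ℕ) (n:ℕ) with hc|hc|hc
    · have hmn : m ≠ n := by simp [Fin.ext_iff]; omega
      rw [if_pos hc, if_pos (by omega), if_neg hmn]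
      push_cast
      ring
    · have hmn : m = n := Fin.ext hc
      rw [if_neg (by omega), if_neg (by omega), if_pos (by omega), if_pos hmn]
      push_cast
      ring
    · have hmn : m ≠ n := by simp [Fin.ext_iff]; omega
      rw [if_neg (by omega), if_pos hc, if_neg (by omega), if_neg hmn]
      push_cast
      ring
  have : (H.mulVec ψ) n = ∑ m : Fin N, H n m * ψ m := rfl
  rw [this, Finset.sum_congr rfl (fun m _ => hterm m), ← Finset.mul_sum, Finset.sum_add_distrib]
  simp only [← Finset.mul_sum, Finset.sum_sub_distrib, Finset.sum_ite_eq', Finset.mem_univ,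
    if_true]

lemma eigen_iff_rec {N : ℕ} (f : Fin N → ℝ) (hf : ∀ n, f n ≠ 0) (g h E : ℝ)
    (H : Matrix (Fin N) (Fin N) ℂ)
    (hH : ∀ n m : Fin N,
      H n m = (1 / 2 : ℂ) * (f n : ℂ) *
        ((g : ℂ) + Complex.I * (h : ℂ) *
          (Real.sign ((((n : ℕ) : ℝ) + 1) - (((m : ℕ) : ℝ) + 1)) : ℂ)) * (f m : ℂ))
    (ψ : Fin N → ℂ) (n : Fin N) :
    (H.mulVec ψ) n = (E:ℂ) * ψ n ↔
      (2*(E:ℂ)/((f n:ℂ)^2) - Complex.I*h) *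
          (∑ m : Fin N, if (m:ℕ) < (n:ℕ)+1 then (f m:ℂ) * ψ m else 0)
        = (2*(E:ℂ)/((f n:ℂ)^2) + Complex.I*h) *
            (∑ m : Fin N, if (m:ℕ) < (n:ℕ) then (f m:ℂ) * ψ m else 0)
          + ((g:ℂ) - Complex.I*h) * (∑ m : Fin N, (f m:ℂ) * ψ m) := by
  have hF : (f n : ℂ) ≠ 0 := Complex.ofReal_ne_zero.2 (hf n)
  rw [eigen_pointwise f g h E H hH ψ n]
  have hT' := Tstep (fun m => (f m:ℂ) * ψ m) (n:ℕ)
  rw [dif_pos n.isLt] at hT'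
  simp only [Fin.eta] at hT'
  rw [hT']
  constructor
  · intro e
    field_simp at e ⊢
    linear_combination (-(f n : ℂ)) * e
  · intro e
    field_simp at e
    apply mul_left_cancel₀ hF
    linear_combination (-1/2 : ℂ) * e

lemma rec_solution (Nn : ℕ) (G u S : ℂ) (hu : u ≠ 0) (a : ℕ → ℂ)
    (T : ℕ → ℂ) (hT0 : T 0 = 0)
    (hma : ∀ k, k < Nn → a k - u ≠ 0)
    (hrec : ∀ k, k < Nn → (a k - u) * T (k+1) = (a k + u) * T k + G * S) :
    ∀ k, k ≤ Nn →
      T k = G/(2*u) * S * ((∏ m ∈ Finset.range k, (a m + u)/(a m - u)) - 1) := by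
  intro k
  induction k with
  | zero => intro _; simp [hT0]
  | succ k ih =>
    intro hk1
    have hk : k < Nn := by omega
    have hihk := ih (by omega)
    have hrk := hrec k hk
    rw [hihk] at hrk
    rw [Finset.prod_range_succ]
    have hden := hma k hk
    have hprodne : (∏ x ∈ Finset.range k, (a x - u)) ≠ 0 :=
      Finset.prod_ne_zero_iff.mpr fun m hm => hma m (by have := Finset.mem_range.mp hm; omega)
    simp only [Finset.prod_div_distrib] at hrk ⊢
    apply mul_left_cancel₀ hden
    rw [hrk]
    field_simp
    ring

/-- Exact quantization condition for the nonzero eigenvalues of the inverse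
Berry–Keating Hamiltonian `H_{n,m} = (1/2) f_n (g + i h sign(n−m)) f_m`. -/
theorem inverse_model_eigenvalue_condition
    (N : ℕ) (hN : 1 ≤ N) (f : Fin N → ℝ) (hf : ∀ n, f n ≠ 0)
    (g h E : ℝ) (hh : h ≠ 0) (hE : E ≠ 0)
    (H : Matrix (Fin N) (Fin N) ℂ)
    (hH : ∀ n m : Fin N,
      H n m = (1 / 2 : ℂ) * (f n : ℂ) *
        ((g : ℂ) + Complex.I * (h : ℂ) *
          (Real.sign ((((n : ℕ) : ℝ) + 1) - (((m : ℕ) : ℝ) + 1)) : ℂ)) * (f m : ℂ)) :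
    (∃ ψ : Fin N → ℂ, ψ ≠ 0 ∧ H.mulVec ψ = (E : ℂ) • ψ) ↔
    ((g : ℂ) + Complex.I * h) / ((g : ℂ) - Complex.I * h) =
      ∏ n : Fin N,
        (2 * (E : ℂ) * ((f n : ℂ) ^ 2)⁻¹ + Complex.I * h) /
          (2 * (E : ℂ) * ((f n : ℂ) ^ 2)⁻¹ - Complex.I * h) := by
  classical
  have hune : Complex.I * (h:ℂ) ≠ 0 :=
    mul_ne_zero Complex.I_ne_zero (Complex.ofReal_ne_zero.2 hh)
  have hhC : (h:ℂ) ≠ 0 := Complex.ofReal_ne_zero.2 hh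
  have hgu : (g:ℂ) - Complex.I * (h:ℂ) ≠ 0 := aux_ne_zero' g h hh
  set a : ℕ → ℂ := fun k =>
    if hk : k < N then 2*(E:ℂ)/((f ⟨k,hk⟩ : ℂ)^2) else 1 + Complex.I * (h:ℂ) with ha
  have haF : ∀ k (hk : k < N), a k = 2*(E:ℂ)/((f ⟨k,hk⟩:ℂ)^2) := by
    intro k hk
    simp only [ha]
    rw [dif_pos hk]
  have hma : ∀ k, k < N → a k - Complex.I * (h:ℂ) ≠ 0 := by
    intro k hk
    rw [haF k hk, show 2*(E:ℂ)/((f ⟨k,hk⟩:ℂ)^2) = ((2*E/(f ⟨k,hk⟩)^2 : ℝ) : ℂ) by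
      push_cast; ring]
    exact aux_ne_zero' _ h hh
  have hprod_eq : (∏ n : Fin N,
        (2 * (E : ℂ) * ((f n : ℂ) ^ 2)⁻¹ + Complex.I * h) /
          (2 * (E : ℂ) * ((f n : ℂ) ^ 2)⁻¹ - Complex.I * h))
      = ∏ m ∈ Finset.range N,
          (a m + Complex.I * (h:ℂ))/(a m - Complex.I * (h:ℂ)) := by
    rw [← Fin.prod_univ_eq_prod_range
      (fun k => (a k + Complex.I * (h:ℂ))/(a k - Complex.I * (h:ℂ))) N]
    refine Finset.prod_congr rfl fun n _ => ?_
    rw [haF (n:ℕ) n.isLt]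
    simp [Fin.eta, div_eq_mul_inv]
  rw [hprod_eq]
  constructor
  · rintro ⟨ψ, hψ, heig⟩
    have hpoint : ∀ n : Fin N, (H.mulVec ψ) n = (E:ℂ) * ψ n := by
      intro n
      rw [heig]
      simp
    have hrecF : ∀ k, k < N →
        (a k - Complex.I * (h:ℂ)) *
            (∑ m : Fin N, if (m:ℕ) < k+1 then (f m:ℂ) * ψ m else 0)
          = (a k + Complex.I * (h:ℂ)) *
              (∑ m : Fin N, if (m:ℕ) < k then (f m:ℂ) * ψ m else 0)
            + ((g:ℂ) - Complex.I*(h:ℂ)) * (∑ m : Fin N, (f m:ℂ) * ψ m) := by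
      intro k hk
      have h2 := (eigen_iff_rec f hf g h E H hH ψ ⟨k,hk⟩).mp (hpoint ⟨k,hk⟩)
      rw [haF k hk]
      exact h2
    have hsol : ∀ k, k ≤ N →
        (∑ m : Fin N, if (m:ℕ) < k then (f m:ℂ) * ψ m else 0)
          = ((g:ℂ) - Complex.I*(h:ℂ))/(2*(Complex.I*(h:ℂ)))
              * (∑ m : Fin N, (f m:ℂ) * ψ m)
              * ((∏ m ∈ Finset.range k,
                  (a m + Complex.I*(h:ℂ))/(a m - Complex.I*(h:ℂ))) - 1) :=
      rec_solution N ((g:ℂ) - Complex.I*(h:ℂ)) (Complex.I * (h:ℂ))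
        (∑ m : Fin N, (f m:ℂ) * ψ m) hune a
        (fun k => ∑ m : Fin N, if (m:ℕ) < k then (f m:ℂ) * ψ m else 0)
        (by simp) hma hrecF
    have hTN : (∑ m : Fin N, if (m:ℕ) < N then (f m:ℂ) * ψ m else 0)
        = ∑ m : Fin N, (f m:ℂ) * ψ m :=
      Finset.sum_congr rfl fun m _ => if_pos m.isLt
    have hSne : (∑ m : Fin N, (f m:ℂ) * ψ m) ≠ 0 := by
      intro hS0
      apply hψ
      funext n
      have h1 : ∀ k, k ≤ N →
          (∑ m : Fin N, if (m:ℕ) < k then (f m:ℂ) * ψ m else 0) = 0 := by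
        intro k hk
        rw [hsol k hk, hS0]
        ring
      have h2 := Tstep (fun m => (f m:ℂ) * ψ m) (n:ℕ)
      rw [dif_pos n.isLt] at h2
      simp only [Fin.eta] at h2
      rw [h1 (n:ℕ) (le_of_lt n.isLt), h1 ((n:ℕ)+1) n.isLt] at h2
      have h3 : (f n:ℂ) * ψ n = 0 := by linear_combination -h2
      have hF : (f n : ℂ) ≠ 0 := Complex.ofReal_ne_zero.2 (hf n)
      exact (mul_eq_zero.mp h3).resolve_left hF
    have hfin := hsol N le_rfl
    rw [hTN] at hfin
    have hprodne : (∏ x ∈ Finset.range N, (a x - Complex.I * (h:ℂ))) ≠ 0 :=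
      Finset.prod_ne_zero_iff.mpr fun m hm => hma m (Finset.mem_range.mp hm)
    simp only [Finset.prod_div_distrib] at hfin ⊢
    have h3 : (∑ m : Fin N, (f m:ℂ) * ψ m) *
        (2 * (Complex.I * (h:ℂ)) * (∏ x ∈ Finset.range N, (a x - Complex.I*(h:ℂ))))
        = (∑ m : Fin N, (f m:ℂ) * ψ m) *
          (((g:ℂ) - Complex.I*(h:ℂ)) *
            ((∏ x ∈ Finset.range N, (a x + Complex.I*(h:ℂ)))
              - (∏ x ∈ Finset.range N, (a x - Complex.I*(h:ℂ))))) := by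
      field_simp at hfin
      linear_combination (∑ m : Fin N, (f m:ℂ) * ψ m) * hfin
    have h4 := mul_left_cancel₀ hSne h3
    field_simp
    linear_combination h4
  · intro hp
    set Rp : ℕ → ℂ := fun k => ∏ m ∈ Finset.range k,
      (a m + Complex.I * (h:ℂ))/(a m - Complex.I * (h:ℂ)) with hRp
    set T : ℕ → ℂ := fun k => ((g:ℂ) - Complex.I*(h:ℂ))/(2*(Complex.I*(h:ℂ))) * (Rp k - 1)
      with hT
    set ψ : Fin N → ℂ := fun n => (T ((n:ℕ)+1) - T (n:ℕ)) / (f n:ℂ) with hψ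
    have hfc : ∀ n : Fin N, (f n:ℂ) * ψ n = T ((n:ℕ)+1) - T (n:ℕ) := by
      intro n
      have hF : (f n : ℂ) ≠ 0 := Complex.ofReal_ne_zero.2 (hf n)
      rw [hψ]
      field_simp
    have hsum : ∀ k, k ≤ N →
        (∑ m : Fin N, if (m:ℕ) < k then (f m:ℂ) * ψ m else 0) = T k := by
      intro k
      induction k with
      | zero =>
        intro _
        simp [hT, hRp]
      | succ k ih =>
        intro hk1
        have hk : k < N := hk1
        rw [Tstep (fun m => (f m:ℂ) * ψ m) k, dif_pos hk, ih (by omega), hfc ⟨k,hk⟩]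
        ring
    have hS : (∑ m : Fin N, (f m:ℂ) * ψ m) = 1 := by
      have h1 : (∑ m : Fin N, (f m:ℂ) * ψ m)
          = ∑ m : Fin N, if (m:ℕ) < N then (f m:ℂ) * ψ m else 0 :=
        (Finset.sum_congr rfl fun m _ => (if_pos m.isLt).symm)
      rw [h1, hsum N le_rfl, hT]
      show ((g:ℂ) - Complex.I*(h:ℂ))/(2*(Complex.I*(h:ℂ))) * (Rp N - 1) = 1
      rw [hRp]
      show ((g:ℂ) - Complex.I*(h:ℂ))/(2*(Complex.I*(h:ℂ))) *
        ((∏ m ∈ Finset.range N,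
          (a m + Complex.I * (h:ℂ))/(a m - Complex.I * (h:ℂ))) - 1) = 1
      rw [← hp]
      field_simp
      ring
    refine ⟨ψ, ?_, ?_⟩
    · intro h0
      rw [h0] at hS
      simp at hS
    · funext n
      have goal2 : (H.mulVec ψ) n = (E:ℂ) * ψ n := by
        apply (eigen_iff_rec f hf g h E H hH ψ n).mpr
        rw [hsum ((n:ℕ)+1) n.isLt, hsum (n:ℕ) (le_of_lt n.isLt), hS, ← haF (n:ℕ) n.isLt]
        have hden := hma (n:ℕ) n.isLt
        have hprodne : (∏ x ∈ Finset.range (n:ℕ), (a x - Complex.I * (h:ℂ))) ≠ 0 :=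
          Finset.prod_ne_zero_iff.mpr fun m hm =>
            hma m (by have := Finset.mem_range.mp hm; have := n.isLt; omega)
        rw [hT]
        show (a (n:ℕ) - Complex.I*(h:ℂ)) *
            (((g:ℂ) - Complex.I*(h:ℂ))/(2*(Complex.I*(h:ℂ))) * (Rp ((n:ℕ)+1) - 1))
          = (a (n:ℕ) + Complex.I*(h:ℂ)) *
              (((g:ℂ) - Complex.I*(h:ℂ))/(2*(Complex.I*(h:ℂ))) * (Rp (n:ℕ) - 1))
            + ((g:ℂ) - Complex.I*(h:ℂ)) * 1
        rw [hRp]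
        simp only [Finset.prod_range_succ, Finset.prod_div_distrib]
        field_simp
        ring
      rw [goal2]
      simp
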